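/- Let c > 1/4 be a real constant. If G is a finite simple graph on n vertices such that every proper induced subgraph H of G satisfies α₁(H) + τ_B(H) ≤ c·n(H)², but α₁(G) + τ_B(G) > c·n², then the clique number of G satisfies ω(G) < 1/(4c−1). -/

import Mathlib

set_option linter.unusedSectionVars false
set_option maxHeartbeats 1000000


open SimpleGraph Finset

variable {V : Type*} [Fintype V] [DecidableEq V]

/-- `A` is a triangle-independent edge set of `G`: a set of edges of `G`
containing at most one edge from each triangle of `G`. -/
def IsTriangleIndep (G : SimpleGraph V) (A : Finset (Sym2 V)) : Prop :=
  (A : Set (Sym2 V)) ⊆ G.edgeSet ∧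
    ∀ a b c : V, G.Adj a b → G.Adj b c → G.Adj a c →
      ({s(a, b), s(b, c), s(a, c)} ∩ A).card ≤ 1

/-- `α₁(G)`: the maximum size of a triangle-independent set in `G`. -/
noncomputable def alphaOne (G : SimpleGraph V) : ℕ :=
  sSup {k | ∃ A : Finset (Sym2 V), IsTriangleIndep G A ∧ A.card = k}

/-- `τ_B(G)`: the minimum size of an edge set of `G` whose deletion makes `G` bipartite. -/
noncomputable def tauB (G : SimpleGraph V) : ℕ :=
  sInf {k | ∃ D : Finset (Sym2 V), (D : Set (Sym2 V)) ⊆ G.edgeSet ∧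
    (G.deleteEdges (D : Set (Sym2 V))).Colorable 2 ∧ D.card = k}

/-- `b(G)`: the maximum size of a vertex set inducing a bipartite subgraph of `G`. -/
noncomputable def bipNum (G : SimpleGraph V) : ℕ :=
  sSup {k | ∃ B : Finset V, (G.induce (B : Set V)).Colorable 2 ∧ B.card = k}

open scoped Classical

lemma sym2_exists_eq {α : Type*} (e : Sym2 α) : ∃ x y, e = s(x, y) := by
  induction e using Sym2.ind with
  | _ x y => exact ⟨x, y, rfl⟩

lemma triIndep_empty (G : SimpleGraph V) : IsTriangleIndep G ∅ := by
  constructor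
  · simp
  · intro a b c _ _ _
    simp

lemma alphaOne_spec (G : SimpleGraph V) :
    ∃ A : Finset (Sym2 V), IsTriangleIndep G A ∧ A.card = alphaOne G := by
  have hne : {k | ∃ A : Finset (Sym2 V), IsTriangleIndep G A ∧ A.card = k}.Nonempty :=
    ⟨0, ∅, triIndep_empty G, rfl⟩
  have hbdd : BddAbove {k | ∃ A : Finset (Sym2 V), IsTriangleIndep G A ∧ A.card = k} := by
    refine ⟨Fintype.card (Sym2 V), ?_⟩
    rintro k ⟨A, -, rfl⟩
    exact A.card_le_univ.trans_eq (by simp)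
  exact Nat.sSup_mem hne hbdd

lemma le_alphaOne (G : SimpleGraph V) {A : Finset (Sym2 V)} (h : IsTriangleIndep G A) :
    A.card ≤ alphaOne G := by
  have hbdd : BddAbove {k | ∃ A : Finset (Sym2 V), IsTriangleIndep G A ∧ A.card = k} := by
    refine ⟨Fintype.card (Sym2 V), ?_⟩
    rintro k ⟨A, -, rfl⟩
    exact A.card_le_univ.trans_eq (by simp)
  exact le_csSup hbdd ⟨A, h, rfl⟩

lemma tauB_spec (G : SimpleGraph V) :
    ∃ D : Finset (Sym2 V), (D : Set (Sym2 V)) ⊆ G.edgeSet ∧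
      (G.deleteEdges (D : Set (Sym2 V))).Colorable 2 ∧ D.card = tauB G := by
  have hne : {k | ∃ D : Finset (Sym2 V), (D : Set (Sym2 V)) ⊆ G.edgeSet ∧
      (G.deleteEdges (D : Set (Sym2 V))).Colorable 2 ∧ D.card = k}.Nonempty := by
    refine ⟨G.edgeFinset.card, G.edgeFinset, by simp, ?_, rfl⟩
    refine ⟨SimpleGraph.Coloring.mk (fun _ => 0) ?_⟩
    intro a b hab
    rw [deleteEdges_adj] at hab
    exact absurd (by simpa using hab.1) hab.2
  exact Nat.sInf_mem hne

lemma tauB_le (G : SimpleGraph V) {D : Finset (Sym2 V)} (h1 : (D : Set (Sym2 V)) ⊆ G.edgeSet)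
    (h2 : (G.deleteEdges (D : Set (Sym2 V))).Colorable 2) : tauB G ≤ D.card :=
  Nat.sInf_le ⟨D, h1, h2, rfl⟩

lemma triIndep_not_two (G : SimpleGraph V) {A : Finset (Sym2 V)} (hA : IsTriangleIndep G A)
    {a b x : V} (hax : G.Adj a x) (hbx : G.Adj b x) (hab : G.Adj a b)
    (h1 : s(a, x) ∈ A) (h2 : s(b, x) ∈ A) : a = b := by
  by_contra hne
  have hcard := hA.2 a x b hax hbx.symm hab
  have hsub : ({s(a, x), s(b, x)} : Finset (Sym2 V)) ⊆ {s(a, x), s(x, b), s(a, b)} ∩ A := by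
    intro e he
    rcases Finset.mem_insert.1 he with rfl | he
    · exact Finset.mem_inter.2 ⟨by simp, h1⟩
    · rw [Finset.mem_singleton] at he
      subst he
      refine Finset.mem_inter.2 ⟨?_, h2⟩
      have : s(b, x) = s(x, b) := Sym2.eq_swap
      simp [this]
  have hpair : ({s(a, x), s(b, x)} : Finset (Sym2 V)).card = 2 := by
    rw [Finset.card_pair]
    intro h
    exact hne (Sym2.congr_left.1 h)
  have := (Finset.card_le_card hsub).trans hcard
  omega

lemma aux_AS (G : SimpleGraph V) (S : Finset V) {A : Finset (Sym2 V)}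
    (hA : IsTriangleIndep G A) :
    (A.filter fun e => ∀ v ∈ e, v ∈ S).card ≤ alphaOne (G.induce (S : Set V)) := by
  have hinj : Function.Injective (Sym2.map (Subtype.val : {x // x ∈ (S : Set V)} → V)) :=
    Sym2.map.injective (fun (a b : ↥(S : Set V)) (h : a.val = b.val) => Subtype.ext h)
  set AS := A.filter fun e => ∀ v ∈ e, v ∈ S with hASdef
  set A' := AS.preimage (Sym2.map Subtype.val) hinj.injOn with hA'def
  have hmem : ∀ {e'}, e' ∈ A' → Sym2.map Subtype.val e' ∈ AS := fun h => Finset.mem_preimage.1 h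
  have hcard : A'.card = AS.card := by
    rw [hA'def, Finset.card_preimage]
    congr 1
    apply Finset.filter_true_of_mem
    intro e he
    obtain ⟨x, y, rfl⟩ := sym2_exists_eq e
    have hx : x ∈ S := (Finset.mem_filter.1 he).2 x (by simp)
    have hy : y ∈ S := (Finset.mem_filter.1 he).2 y (by simp)
    exact ⟨s(⟨x, by simpa using hx⟩, ⟨y, by simpa using hy⟩), by simp [Sym2.map_pair_eq]⟩
  rw [← hcard]
  apply le_alphaOne
  constructor
  · intro e' he'
    have he'' : e' ∈ A' := Finset.mem_coe.1 he'
    obtain ⟨x, y, rfl⟩ := sym2_exists_eq e'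
    have h1 : Sym2.map Subtype.val s(x, y) ∈ AS := hmem he''
    rw [Sym2.map_pair_eq] at h1
    have hadj : G.Adj ↑x ↑y := by
      have := hA.1 (Finset.mem_coe.2 (Finset.mem_filter.1 h1).1)
      exact (SimpleGraph.mem_edgeSet _).1 this
    exact (SimpleGraph.mem_edgeSet _).2 hadj
  · intro a b c hab hbc hac
    have h1 := hA.2 ↑a ↑b ↑c hab hbc hac
    refine le_trans (Finset.card_le_card_of_injOn (Sym2.map Subtype.val) ?_ hinj.injOn) h1
    intro e he
    rcases Finset.mem_inter.1 he with ⟨ht, hA'mem⟩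
    refine Finset.mem_inter.2 ⟨?_, (Finset.mem_filter.1 (hmem hA'mem)).1⟩
    rcases Finset.mem_insert.1 ht with rfl | ht
    · simp [Sym2.map_pair_eq]
    rcases Finset.mem_insert.1 ht with rfl | ht
    · simp [Sym2.map_pair_eq]
    rw [Finset.mem_singleton] at ht
    subst ht
    simp [Sym2.map_pair_eq]

noncomputable def pairFinset : Sym2 V → Finset V :=
  Sym2.lift ⟨fun x y => {x, y}, fun a b => Finset.pair_comm a b⟩

lemma pairFinset_mk (x y : V) : pairFinset s(x, y) = {x, y} := rfl

lemma mem_pairFinset {v : V} {e : Sym2 V} : v ∈ pairFinset e ↔ v ∈ e := by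
  obtain ⟨x, y, rfl⟩ := sym2_exists_eq e
  rw [pairFinset_mk]
  simp [Sym2.mem_iff]

lemma sym2_eq_of_pair_eq {x y a b : V} (hxy : x ≠ y)
    (h : ({x, y} : Finset V) = {a, b}) : s(x, y) = s(a, b) := by
  have hx : x ∈ ({a, b} : Finset V) := h ▸ (by simp)
  have hy : y ∈ ({a, b} : Finset V) := h ▸ (by simp)
  have ha : a ∈ ({x, y} : Finset V) := h ▸ (by simp)
  simp only [Finset.mem_insert, Finset.mem_singleton] at hx hy ha
  rcases hx with rfl | rfl
  · rcases hy with rfl | rfl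
    · exact absurd rfl hxy
    · rfl
  · rcases hy with rfl | rfl
    · exact Sym2.eq_swap
    · rcases ha with rfl | rfl <;> exact absurd rfl hxy

lemma aux_KK (G : SimpleGraph V) {A : Finset (Sym2 V)} (hA : IsTriangleIndep G A)
    {K : Finset V} (hK : G.IsClique (K : Set V)) :
    2 * (A.filter fun e => ∀ v ∈ e, v ∈ K).card ≤ K.card := by
  set X := A.filter fun e => ∀ v ∈ e, v ∈ K with hX
  have hadjX : ∀ e ∈ X, ∀ x y : V, e = s(x, y) → G.Adj x y := by
    intro e he x y hexy
    have := hA.1 (Finset.mem_coe.2 (Finset.mem_filter.1 he).1)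
    rw [hexy] at this
    exact (SimpleGraph.mem_edgeSet _).1 this
  have hcard2 : ∀ e ∈ X, (pairFinset e).card = 2 := by
    intro e he
    obtain ⟨x, y, rfl⟩ := sym2_exists_eq e
    rw [pairFinset_mk]
    exact Finset.card_pair (hadjX _ he x y rfl).ne
  have hdisj : ∀ e₁ ∈ X, ∀ e₂ ∈ X, e₁ ≠ e₂ → Disjoint (pairFinset e₁) (pairFinset e₂) := by
    intro e₁ h1 e₂ h2 hne
    rw [Finset.disjoint_left]
    intro v hv1 hv2
    obtain ⟨a, he1⟩ := Sym2.mem_iff_exists.1 (mem_pairFinset.1 hv1)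
    obtain ⟨b, he2⟩ := Sym2.mem_iff_exists.1 (mem_pairFinset.1 hv2)
    have hne' : a ≠ b := by
      intro h
      exact hne (by rw [he1, he2, h])
    have hva : G.Adj v a := hadjX _ h1 v a he1
    have hvb : G.Adj v b := hadjX _ h2 v b he2
    have haK : a ∈ K := (Finset.mem_filter.1 h1).2 a (by rw [he1]; simp)
    have hbK : b ∈ K := (Finset.mem_filter.1 h2).2 b (by rw [he2]; simp)
    have hab : G.Adj a b := hK (by simpa using haK) (by simpa using hbK) hne'
    have hmem1 : s(a, v) ∈ A := by
      have : s(v, a) ∈ A := he1 ▸ (Finset.mem_filter.1 h1).1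
      rwa [Sym2.eq_swap] at this
    have hmem2 : s(b, v) ∈ A := by
      have : s(v, b) ∈ A := he2 ▸ (Finset.mem_filter.1 h2).1
      rwa [Sym2.eq_swap] at this
    exact hne' (triIndep_not_two G hA hva.symm hvb.symm hab hmem1 hmem2)
  have hbi : (X.biUnion pairFinset).card = ∑ e ∈ X, (pairFinset e).card :=
    Finset.card_biUnion hdisj
  have hsum : ∑ e ∈ X, (pairFinset e).card = 2 * X.card := by
    rw [Finset.sum_congr rfl hcard2, Finset.sum_const, smul_eq_mul, mul_comm]
  have hsubK : X.biUnion pairFinset ⊆ K := by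
    intro v hv
    rcases Finset.mem_biUnion.1 hv with ⟨e, he, hve⟩
    exact (Finset.mem_filter.1 he).2 v (mem_pairFinset.1 hve)
  calc 2 * X.card = (X.biUnion pairFinset).card := by rw [hbi, hsum]
  _ ≤ K.card := Finset.card_le_card hsubK

lemma aux_cross (G : SimpleGraph V) {A : Finset (Sym2 V)} (hA : IsTriangleIndep G A)
    {K : Finset V} (hK : G.IsClique (K : Set V)) :
    (A.filter fun e => (∃ v ∈ e, v ∈ K) ∧ ¬ ∀ v ∈ e, v ∈ K).card
      ≤ (Finset.univ \ K).card := by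
  set X := A.filter fun e => (∃ v ∈ e, v ∈ K) ∧ ¬ ∀ v ∈ e, v ∈ K with hX
  rcases X.eq_empty_or_nonempty with h | ⟨e₀, he₀⟩
  · simp [← hX, h]
  obtain ⟨v₀, y₀, he₀eq⟩ := sym2_exists_eq e₀
  set f : Sym2 V → V := Sym2.lift ⟨fun x y =>
      if x ∈ K then (if y ∈ K then v₀ else y) else (if y ∈ K then x else v₀), by
    intro a b
    by_cases ha : a ∈ K <;> by_cases hb : b ∈ K <;> simp [ha, hb]⟩ with hf
  have hstruct : ∀ e ∈ X, ∃ a h, e = s(a, h) ∧ a ∈ K ∧ h ∉ K ∧ G.Adj a h ∧ f e = h := by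
    intro e he
    obtain ⟨x, y, rfl⟩ := sym2_exists_eq e
    have hmem := Finset.mem_filter.1 he
    have hadj : G.Adj x y := (SimpleGraph.mem_edgeSet _).1 (hA.1 (Finset.mem_coe.2 hmem.1))
    obtain ⟨hex, hnall⟩ := hmem.2
    by_cases hx : x ∈ K <;> by_cases hy : y ∈ K
    · exact absurd (fun v hv => by rcases Sym2.mem_iff.1 hv with rfl | rfl <;> assumption) hnall
    · exact ⟨x, y, rfl, hx, hy, hadj, by simp [hf, Sym2.lift_mk, hx, hy]⟩
    · exact ⟨y, x, Sym2.eq_swap.symm, hy, hx, hadj.symm, by simp [hf, Sym2.lift_mk, hx, hy]⟩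
    · exfalso
      rcases hex with ⟨v, hv, hvK⟩
      rcases Sym2.mem_iff.1 hv with rfl | rfl
      · exact hx hvK
      · exact hy hvK
  apply Finset.card_le_card_of_injOn f
  · intro e he
    obtain ⟨a, h, rfl, haK, hhK, hadj, hfe⟩ := hstruct e he
    rw [hfe]
    simp [Finset.mem_sdiff, hhK]
  · intro e₁ h1 e₂ h2 hf12
    have h1' : e₁ ∈ X := h1
    have h2' : e₂ ∈ X := h2
    obtain ⟨a₁, b₁, he1, ha1, hb1, hadj1, hfe1⟩ := hstruct e₁ h1'
    obtain ⟨a₂, b₂, he2, ha2, hb2, hadj2, hfe2⟩ := hstruct e₂ h2'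
    rw [hfe1, hfe2] at hf12
    subst hf12
    have hmem1 : s(a₁, b₁) ∈ A := he1 ▸ (Finset.mem_filter.1 h1').1
    have hmem2 : s(a₂, b₁) ∈ A := he2 ▸ (Finset.mem_filter.1 h2').1
    by_cases haa : a₁ = a₂
    · rw [he1, he2, haa]
    · have hab : G.Adj a₁ a₂ := hK (by simpa using ha1) (by simpa using ha2) haa
      exact absurd (triIndep_not_two G hA hadj1 hadj2 hab hmem1 hmem2) haa

/-- If `c > 1/4` and `G` is a minimal counterexample to `α₁ + τ_B ≤ c n²`
(every proper induced subgraph satisfies the bound but `G` does not),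
then `ω(G) < 1/(4c - 1)`. -/
theorem cliqueNum_lt_of_minimal_counterexample (c : ℝ) (hc : 1 / 4 < c) (G : SimpleGraph V)
    (hmin : ∀ S : Finset V, S ≠ Finset.univ →
      (alphaOne (G.induce (S : Set V)) + tauB (G.induce (S : Set V)) : ℝ) ≤ c * (S.card : ℝ) ^ 2)
    (hG : c * (Fintype.card V : ℝ) ^ 2 < (alphaOne G + tauB G : ℝ)) :
    (G.cliqueNum : ℝ) < 1 / (4 * c - 1) := by
  classical
  by_contra hlt
  push_neg at hlt
  have hc4 : (0 : ℝ) < 4 * c - 1 := by linarith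
  have hw1 : (1 : ℝ) ≤ (G.cliqueNum : ℝ) * (4 * c - 1) := by
    rw [div_le_iff₀ hc4] at hlt
    linarith
  obtain ⟨K, hK⟩ := G.exists_isNClique_cliqueNum
  set w := G.cliqueNum with hwdef
  have hwpos : 0 < w := by
    rcases Nat.eq_zero_or_pos w with h | h
    · rw [h] at hw1; norm_num at hw1
    · exact h
  have hKcard : K.card = w := hK.card_eq
  have hKclique : G.IsClique (K : Set V) := hK.isClique
  set S : Finset V := Finset.univ \ K with hSdef
  set m := S.card with hmdef
  have hmn : m + w = Fintype.card V := by
    rw [hmdef, hSdef, ← hKcard]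
    exact Finset.card_sdiff_add_card_eq_card (Finset.subset_univ K)
  have hSK : ∀ {x : V}, x ∈ S ↔ x ∉ K := by
    intro x; simp [hSdef]
  obtain ⟨k₀, hk₀⟩ := Finset.card_pos.1 (show 0 < K.card by omega)
  have hSne : S ≠ Finset.univ := by
    intro h
    have : k₀ ∈ S := h ▸ Finset.mem_univ k₀
    exact (hSK.1 this) hk₀
  -- maximum clique property
  have hdegK : ∀ s ∈ S, (K.filter fun k => G.Adj k s).card ≤ w - 1 := by
    intro s hs
    by_contra hgt
    push_neg at hgt
    have hsub : K.filter (fun k => G.Adj k s) ⊆ K := Finset.filter_subset _ _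
    have hle : (K.filter fun k => G.Adj k s).card ≤ w := by
      rw [← hKcard]; exact Finset.card_le_card hsub
    have heq : K.filter (fun k => G.Adj k s) = K :=
      Finset.eq_of_subset_of_card_le hsub (by omega)
    have hadjall : ∀ k ∈ K, G.Adj k s := by
      intro k hk
      have : k ∈ K.filter fun k => G.Adj k s := by rw [heq]; exact hk
      exact (Finset.mem_filter.1 this).2
    have hsK : s ∉ K := hSK.1 hs
    have hclq : G.IsClique ((insert s K : Finset V) : Set V) := by
      rw [Finset.coe_insert]
      exact hKclique.insert fun b hb hne => (hadjall b (by simpa using hb)).symm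
    have hcard1 : (insert s K).card = w + 1 := by
      rw [Finset.card_insert_of_notMem hsK, hKcard]
    have hle1 := hclq.card_le_cliqueNum
    rw [hcard1] at hle1
    omega
  -- ======== alpha side ========
  obtain ⟨A, hA, hAcard⟩ := alphaOne_spec G
  set P1 : Sym2 V → Prop := fun e => ∀ v ∈ e, v ∈ S with hP1
  set P2 : Sym2 V → Prop := fun e => ∀ v ∈ e, v ∈ K with hP2
  have hAsplit : alphaOne G = (A.filter P1).card + ((A.filter fun e => ¬ P1 e).filter P2).card
      + ((A.filter fun e => ¬ P1 e).filter fun e => ¬ P2 e).card := by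
    rw [← hAcard]
    rw [← Finset.card_filter_add_card_filter_not (s := A) P1]
    rw [← Finset.card_filter_add_card_filter_not (s := A.filter fun e => ¬ P1 e) P2]
    ring
  have hAS : (A.filter P1).card ≤ alphaOne (G.induce (S : Set V)) := aux_AS G S hA
  have hAKK : 2 * ((A.filter fun e => ¬ P1 e).filter P2).card ≤ w := by
    calc 2 * ((A.filter fun e => ¬ P1 e).filter P2).card ≤ 2 * (A.filter P2).card := by
          have hsub : (A.filter fun e => ¬ P1 e).filter P2 ⊆ A.filter P2 := by
            intro e he
            have h1 := Finset.mem_filter.1 he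
            have h2 := Finset.mem_filter.1 h1.1
            exact Finset.mem_filter.2 ⟨h2.1, h1.2⟩
          exact Nat.mul_le_mul_left 2 (Finset.card_le_card hsub)
    _ ≤ K.card := aux_KK G hA hKclique
    _ = w := hKcard
  have hAKS : ((A.filter fun e => ¬ P1 e).filter fun e => ¬ P2 e).card ≤ m := by
    refine le_trans (Finset.card_le_card ?_) (aux_cross G hA hKclique)
    intro e he
    have h3 := Finset.mem_filter.1 he
    have h4 := Finset.mem_filter.1 h3.1
    refine Finset.mem_filter.2 ⟨h4.1, ?_, h3.2⟩
    have h5 : ¬ ∀ v ∈ e, v ∈ S := h4.2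
    push_neg at h5
    obtain ⟨v, hv, hvS⟩ := h5
    refine ⟨v, hv, ?_⟩
    by_contra hvK
    exact hvS (hSK.2 hvK)
  have hAchain : alphaOne G ≤ alphaOne (G.induce (S : Set V))
      + ((A.filter fun e => ¬ P1 e).filter P2).card + m := by omega
  -- ======== tau side ========
  obtain ⟨D', hD'sub, hD'col, hD'card⟩ := tauB_spec (G.induce (S : Set V))
  obtain ⟨C⟩ := hD'col
  set colS : V → Fin 2 := fun x => if hx : x ∈ (S : Set V) then C ⟨x, hx⟩ else 0 with hcolS
  set E := (K ×ˢ S).filter (fun p => G.Adj p.1 p.2) with hE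
  have hEcard : E.card ≤ (w - 1) * m := by
    have hfib : ∀ p ∈ E, Prod.snd p ∈ S := by
      intro p hp
      exact (Finset.mem_product.1 (Finset.mem_filter.1 hp).1).2
    rw [hE, Finset.card_eq_sum_card_fiberwise hfib]
    have hbound : ∀ s ∈ S,
        (((K ×ˢ S).filter (fun p => G.Adj p.1 p.2)).filter fun p => Prod.snd p = s).card
          ≤ w - 1 := by
      intro s hs
      refine le_trans ?_ (hdegK s hs)
      apply Finset.card_le_card_of_injOn Prod.fst
      · intro p hp
        have h1 := Finset.mem_filter.1 hp
        have h2 := Finset.mem_filter.1 h1.1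
        refine Finset.mem_filter.2 ⟨(Finset.mem_product.1 h2.1).1, ?_⟩
        rw [← h1.2]
        exact h2.2
      · intro p hp q hq hpq
        have h1 : p.2 = s := (Finset.mem_filter.1 hp).2
        have h2 : q.2 = s := (Finset.mem_filter.1 hq).2
        exact Prod.ext hpq (h1.trans h2.symm)
    calc ∑ s ∈ S, (((K ×ˢ S).filter (fun p => G.Adj p.1 p.2)).filter
          fun p => Prod.snd p = s).card ≤ ∑ _s ∈ S, (w - 1) := Finset.sum_le_sum hbound
    _ = m * (w - 1) := by rw [Finset.sum_const, smul_eq_mul, hmdef]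
    _ = (w - 1) * m := Nat.mul_comm _ _
  -- cross-count function
  set cross : Finset V → ℕ := fun U => (E.filter fun p => (p.1 ∈ U ↔ colS p.2 = 1)).card
    with hcrossdef
  have hcrossSplit : ∀ T ⊆ K, cross T + cross (K \ T) = E.card := by
    intro T hTK
    have h2 : E.filter (fun p => ¬ (p.1 ∈ T ↔ colS p.2 = 1))
        = E.filter (fun p => (p.1 ∈ K \ T ↔ colS p.2 = 1)) := by
      apply Finset.filter_congr
      intro p hp
      have hpK : p.1 ∈ K := (Finset.mem_product.1 (Finset.mem_filter.1 hp).1).1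
      simp only [Finset.mem_sdiff, hpK, true_and]
      tauto
    have h1 := Finset.card_filter_add_card_filter_not
      (s := E) (fun p => (p.1 ∈ T ↔ colS p.2 = 1))
    rw [h2] at h1
    exact h1
  obtain ⟨T, hTK, hTcard⟩ := Finset.exists_subset_card_eq
    (show w / 2 ≤ K.card by rw [hKcard]; exact Nat.div_le_self _ _)
  have hKTcard : (K \ T).card = w - w / 2 := by
    rw [Finset.card_sdiff_of_subset hTK, hKcard, hTcard]
  obtain ⟨U, hUK, hUchoose, hUcross⟩ : ∃ U, U ⊆ K ∧
      (U.card = w / 2 ∧ (K \ U).card = w - w / 2 ∨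
        U.card = w - w / 2 ∧ (K \ U).card = w / 2) ∧ 2 * cross U ≤ E.card := by
    have hsplit := hcrossSplit T hTK
    by_cases hUc : 2 * cross T ≤ E.card
    · exact ⟨T, hTK, Or.inl ⟨hTcard, hKTcard⟩, hUc⟩
    · refine ⟨K \ T, Finset.sdiff_subset, Or.inr ⟨hKTcard, ?_⟩, by omega⟩
      rw [Finset.sdiff_sdiff_self_left, Finset.inter_eq_right.2 hTK]
      exact hTcard
  set F : V → Fin 2 := fun x => if x ∈ U then 1 else colS x with hF
  have hFsymm : Symmetric (fun x y : V => F x = F y) := fun x y h => h.symm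
  set Dtot := G.edgeFinset.filter (fun e => e ∈ Sym2.fromRel (r := fun x y : V => F x = F y) ⟨fun a b h => hFsymm h⟩) with hDtot
  have htauB : tauB G ≤ Dtot.card := by
    apply tauB_le
    · intro e he
      have he' : e ∈ Dtot := Finset.mem_coe.1 he
      exact (SimpleGraph.mem_edgeFinset).1 (Finset.mem_filter.1 he').1
    · refine ⟨SimpleGraph.Coloring.mk F ?_⟩
      intro x y hxy
      rw [SimpleGraph.deleteEdges_adj] at hxy
      intro hFeq
      exact hxy.2 (Finset.mem_coe.2 (Finset.mem_filter.2
        ⟨(SimpleGraph.mem_edgeFinset).2 hxy.1, Sym2.fromRel_prop.2 hFeq⟩))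
  have hDsplit : Dtot.card = (Dtot.filter P1).card
      + ((Dtot.filter fun e => ¬ P1 e).filter P2).card
      + ((Dtot.filter fun e => ¬ P1 e).filter fun e => ¬ P2 e).card := by
    rw [← Finset.card_filter_add_card_filter_not (s := Dtot) P1]
    rw [← Finset.card_filter_add_card_filter_not
      (s := Dtot.filter fun e => ¬ P1 e) P2]
    ring
  have hDtotProp : ∀ {x y : V}, s(x, y) ∈ Dtot → G.Adj x y ∧ F x = F y := by
    intro x y h
    have h1 := Finset.mem_filter.1 h
    exact ⟨(SimpleGraph.mem_edgeSet _).1 ((SimpleGraph.mem_edgeFinset).1 h1.1),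
      (Sym2.fromRel_prop (r := fun x y : V => F x = F y)).1 h1.2⟩
  -- edges inside S
  have hDss : (Dtot.filter P1).card ≤ tauB (G.induce (S : Set V)) := by
    have hinj : Function.Injective (Sym2.map (Subtype.val : {x // x ∈ (S : Set V)} → V)) :=
      Sym2.map.injective (fun (a b : ↥(S : Set V)) (h : a.val = b.val) => Subtype.ext h)
    rw [← hD'card, ← Finset.card_image_of_injective D' hinj]
    apply Finset.card_le_card
    intro e he
    obtain ⟨x, y, rfl⟩ := sym2_exists_eq e
    have h1 := Finset.mem_filter.1 he
    have hadj : G.Adj x y := (hDtotProp h1.1).1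
    have hsame : F x = F y := (hDtotProp h1.1).2
    have hxS : x ∈ S := h1.2 x (by simp)
    have hyS : y ∈ S := h1.2 y (by simp)
    have hxU : x ∉ U := fun h => (hSK.1 hxS) (hUK h)
    have hyU : y ∉ U := fun h => (hSK.1 hyS) (hUK h)
    have hxS' : x ∈ (S : Set V) := by simpa using hxS
    have hyS' : y ∈ (S : Set V) := by simpa using hyS
    have hCeq : C ⟨x, hxS'⟩ = C ⟨y, hyS'⟩ := by
      rw [hF] at hsame
      simp only [hxU, hyU, if_false, hcolS] at hsame
      rw [dif_pos hxS', dif_pos hyS'] at hsame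
      exact hsame
    have hadj' : (G.induce (S : Set V)).Adj ⟨x, hxS'⟩ ⟨y, hyS'⟩ := hadj
    have hmemD' : s((⟨x, hxS'⟩ : {v // v ∈ (S : Set V)}), ⟨y, hyS'⟩) ∈ D' := by
      by_contra hno
      have hdel : ((G.induce (S : Set V)).deleteEdges (D' : Set (Sym2 _))).Adj
          ⟨x, hxS'⟩ ⟨y, hyS'⟩ := by
        rw [SimpleGraph.deleteEdges_adj]
        exact ⟨hadj', fun hc => hno (Finset.mem_coe.1 hc)⟩
      exact C.valid hdel hCeq
    exact Finset.mem_image.2 ⟨_, hmemD', by rw [Sym2.map_pair_eq]⟩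
  -- edges inside K
  have hDkk : ((Dtot.filter fun e => ¬ P1 e).filter P2).card
      ≤ (w / 2).choose 2 + (w - w / 2).choose 2 := by
    have hchooseEq : U.card.choose 2 + (K \ U).card.choose 2
        = (w / 2).choose 2 + (w - w / 2).choose 2 := by
      rcases hUchoose with ⟨h1, h2⟩ | ⟨h1, h2⟩
      · rw [h1, h2]
      · rw [h1, h2, Nat.add_comm]
    rw [← hchooseEq]
    refine le_trans (Finset.card_le_card_of_injOn
        (t := U.powersetCard 2 ∪ (K \ U).powersetCard 2) pairFinset ?_ ?_)
      (le_trans (Finset.card_union_le _ _) ?_)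
    · intro e he
      have h1 := Finset.mem_filter.1 he
      have h2 := Finset.mem_filter.1 h1.1
      obtain ⟨x, y, rfl⟩ := sym2_exists_eq e
      have hadj : G.Adj x y := (hDtotProp h2.1).1
      have hsame : F x = F y := (hDtotProp h2.1).2
      have hxK : x ∈ K := h1.2 x (by simp)
      have hyK : y ∈ K := h1.2 y (by simp)
      have hxS : x ∉ (S : Set V) := by
        simp only [Finset.mem_coe]
        exact fun h => (hSK.1 h) hxK
      have hyS : y ∉ (S : Set V) := by
        simp only [Finset.mem_coe]
        exact fun h => (hSK.1 h) hyK
      have hiff : x ∈ U ↔ y ∈ U := by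
        rw [hF] at hsame
        by_cases hx : x ∈ U <;> by_cases hy : y ∈ U <;>
          simp only [hx, hy, if_true, if_false, hcolS, dif_neg hxS, dif_neg hyS] at hsame ⊢
        · exact absurd hsame.symm (by decide)
        · exact absurd hsame (by decide)
      rw [pairFinset_mk, Finset.mem_coe, Finset.mem_union]
      by_cases hx : x ∈ U
      · left
        rw [Finset.mem_powersetCard]
        refine ⟨?_, Finset.card_pair hadj.ne⟩
        intro v hv
        rcases Finset.mem_insert.1 hv with rfl | hv
        · exact hx
        · rw [Finset.mem_singleton] at hv; subst hv; exact hiff.1 hx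
      · right
        rw [Finset.mem_powersetCard]
        refine ⟨?_, Finset.card_pair hadj.ne⟩
        intro v hv
        have hy : y ∉ U := fun h => hx (hiff.2 h)
        rcases Finset.mem_insert.1 hv with rfl | hv
        · exact Finset.mem_sdiff.2 ⟨hxK, hx⟩
        · rw [Finset.mem_singleton] at hv; subst hv; exact Finset.mem_sdiff.2 ⟨hyK, hy⟩
    · intro e₁ h1 e₂ h2 hpf
      have h1' : e₁ ∈ (Dtot.filter fun e => ¬ P1 e).filter P2 := h1
      have h2' : e₂ ∈ (Dtot.filter fun e => ¬ P1 e).filter P2 := h2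
      obtain ⟨x, y, rfl⟩ := sym2_exists_eq e₁
      obtain ⟨a, b, rfl⟩ := sym2_exists_eq e₂
      have hadj1 : G.Adj x y :=
        (hDtotProp (Finset.mem_filter.1 (Finset.mem_filter.1 h1').1).1).1
      rw [pairFinset_mk, pairFinset_mk] at hpf
      exact sym2_eq_of_pair_eq hadj1.ne hpf
    · rw [Finset.card_powersetCard, Finset.card_powersetCard]
  -- cross edges
  have hDcr : ((Dtot.filter fun e => ¬ P1 e).filter fun e => ¬ P2 e).card ≤ cross U := by
    set X := (Dtot.filter fun e => ¬ P1 e).filter fun e => ¬ P2 e with hXdef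
    rcases X.eq_empty_or_nonempty with h | ⟨e₀, he₀⟩
    · rw [h]; simp
    obtain ⟨v₀, y₀, he₀eq⟩ := sym2_exists_eq e₀
    set g : Sym2 V → V × V := Sym2.lift ⟨fun x y =>
        if x ∈ K then (if y ∈ K then (v₀, v₀) else (x, y))
        else (if y ∈ K then (y, x) else (v₀, v₀)), by
      intro a b
      by_cases ha : a ∈ K <;> by_cases hb : b ∈ K <;> simp [ha, hb]⟩ with hg
    have hstruct : ∀ e ∈ X, ∃ a h, e = s(a, h) ∧ a ∈ K ∧ h ∈ S ∧ G.Adj a h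
        ∧ F a = F h ∧ g e = (a, h) := by
      intro e he
      obtain ⟨x, y, rfl⟩ := sym2_exists_eq e
      have h1 := Finset.mem_filter.1 he
      have h2 := Finset.mem_filter.1 h1.1
      have hadj : G.Adj x y := (hDtotProp h2.1).1
      have hsame : F x = F y := (hDtotProp h2.1).2
      have hnS : ¬ ∀ v ∈ s(x, y), v ∈ S := h2.2
      have hnK : ¬ ∀ v ∈ s(x, y), v ∈ K := h1.2
      push_neg at hnS hnK
      by_cases hx : x ∈ K <;> by_cases hy : y ∈ K
      · exfalso
        obtain ⟨v, hv, hvK⟩ := hnK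
        rcases Sym2.mem_iff.1 hv with rfl | rfl
        · exact hvK hx
        · exact hvK hy
      · exact ⟨x, y, rfl, hx, hSK.2 hy, hadj, hsame, by simp [hg, Sym2.lift_mk, hx, hy]⟩
      · exact ⟨y, x, Sym2.eq_swap.symm, hy, hSK.2 hx, hadj.symm, hsame.symm,
          by simp [hg, Sym2.lift_mk, hx, hy]⟩
      · exfalso
        obtain ⟨v, hv, hvS⟩ := hnS
        rcases Sym2.mem_iff.1 hv with rfl | rfl
        · exact hvS (hSK.2 hx)
        · exact hvS (hSK.2 hy)
    apply Finset.card_le_card_of_injOn g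
    · intro e he
      obtain ⟨a, h, rfl, haK, hhS, hadj, hFeq, hge⟩ := hstruct e he
      rw [hge]
      refine Finset.mem_filter.2 ⟨Finset.mem_filter.2
        ⟨Finset.mem_product.2 ⟨haK, hhS⟩, hadj⟩, ?_⟩
      have hhU : h ∉ U := fun hh => (hSK.1 hhS) (hUK hh)
      have hhS' : h ∈ (S : Set V) := by simpa using hhS
      have haS' : a ∉ (S : Set V) := by
        simp only [Finset.mem_coe]
        exact fun hh => (hSK.1 hh) haK
      have hFh : F h = colS h := by simp [hF, hhU]
      by_cases ha : a ∈ U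
      · refine iff_of_true ha ?_
        rw [← hFh, ← hFeq]
        simp [hF, ha]
      · refine iff_of_false ha ?_
        have haS2 : a ∉ S := fun hh => (hSK.1 hh) haK
        have hFa0 : F a = 0 := by simp [hF, ha, hcolS, haS', haS2]
        rw [← hFh, ← hFeq, hFa0]
        decide
    · intro e₁ h1 e₂ h2 hg12
      have h1' : e₁ ∈ X := h1
      have h2' : e₂ ∈ X := h2
      obtain ⟨a₁, b₁, he1, _, _, _, _, hge1⟩ := hstruct e₁ h1'
      obtain ⟨a₂, b₂, he2, _, _, _, _, hge2⟩ := hstruct e₂ h2'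
      rw [hge1, hge2] at hg12
      injection hg12 with hq1 hq2
      rw [he1, he2, hq1, hq2]
  have htauchain : tauB G ≤ tauB (G.induce (S : Set V))
      + ((w / 2).choose 2 + (w - w / 2).choose 2) + cross U := by omega
  -- ======== assembling ========
  have hminS := hmin S hSne
  rw [← hmdef] at hminS
  -- numeric facts
  have hwR : (1 : ℝ) ≤ (w : ℝ) := by exact_mod_cast hwpos
  have hmR : (0 : ℝ) ≤ (m : ℝ) := Nat.cast_nonneg m
  have hnR : ((Fintype.card V : ℕ) : ℝ) = (m : ℝ) + (w : ℝ) := by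
    rw [← hmn]; push_cast; ring
  set a2 : ℕ := ((A.filter fun e => ¬ P1 e).filter P2).card with ha2
  have hkey : ((w / 2).choose 2 : ℝ) + ((w - w / 2).choose 2 : ℝ) + (a2 : ℝ)
      ≤ (w : ℝ) ^ 2 / 4 := by
    set u := w / 2 with hu
    have hpar : w = 2 * u ∨ w = 2 * u + 1 := by omega
    have ha2u : a2 ≤ u := by omega
    have ha2uR : (a2 : ℝ) ≤ (u : ℝ) := by exact_mod_cast ha2u
    rcases hpar with h | h
    · have hwu : w - u = u := by omega
      rw [hwu, Nat.cast_choose_two]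
      have hwR' : (w : ℝ) = 2 * (u : ℝ) := by exact_mod_cast h
      rw [hwR']
      nlinarith [Nat.cast_nonneg (α := ℝ) u]
    · have hwu : w - u = u + 1 := by omega
      rw [hwu, Nat.cast_choose_two, Nat.cast_choose_two]
      have hwR' : (w : ℝ) = 2 * (u : ℝ) + 1 := by exact_mod_cast h
      rw [hwR']
      push_cast
      nlinarith [Nat.cast_nonneg (α := ℝ) u]
  have hcrossR : 2 * (cross U : ℝ) ≤ ((w : ℝ) - 1) * (m : ℝ) := by
    have h1 : 2 * cross U ≤ (w - 1) * m := le_trans hUcross hEcard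
    have h2 : ((w - 1 : ℕ) : ℝ) = (w : ℝ) - 1 := by
      rw [Nat.cast_sub hwpos]; norm_num
    calc 2 * (cross U : ℝ) = ((2 * cross U : ℕ) : ℝ) := by push_cast; ring
    _ ≤ (((w - 1) * m : ℕ) : ℝ) := by exact_mod_cast h1
    _ = ((w : ℝ) - 1) * (m : ℝ) := by rw [Nat.cast_mul, h2]
  have hAreal : (alphaOne G : ℝ) ≤ (alphaOne (G.induce (S : Set V)) : ℝ) + (a2 : ℝ) + (m : ℝ) := by
    exact_mod_cast hAchain
  have hTreal : (tauB G : ℝ) ≤ (tauB (G.induce (S : Set V)) : ℝ)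
      + (((w / 2).choose 2 : ℝ) + ((w - w / 2).choose 2 : ℝ)) + (cross U : ℝ) := by
    exact_mod_cast htauchain
  rw [hnR] at hG
  -- final contradiction
  have q1 : (0 : ℝ) ≤ (m : ℝ) * (4 * c * (w : ℝ) - (w : ℝ) - 1) := by
    apply mul_nonneg hmR
    nlinarith
  have q2 : (0 : ℝ) ≤ (w : ℝ) * (4 * c * (w : ℝ) - (w : ℝ) - 1) := by
    apply mul_nonneg (by linarith)
    nlinarith
  nlinarith [hG, hAreal, hTreal, hminS, hkey, hcrossR, q1, q2]
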